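/- Let S = ⊕ᵢ Sᵢ be the algebra of polynomial functions on T*ℝⁿ graded by degree in the fiber variables ξ, with the canonical Poisson bracket satisfying {Sᵢ, Sⱼ} ⊆ S_{i+j-1}. Then for any i ≥ -1 and k ≥ 1, the set {S ∈ S : {S, S_k} ⊆ Sᵢ} equals ℝ·1 + S_{i-k+1} (where Sⱼ = 0 for j < 0). -/

import Mathlib

open MvPolynomial

/-- Weight grading by total `ξ`-degree. -/
def xiWeight (n : ℕ) : (Fin n ⊕ Fin n) → ℕ := Sum.elim (fun _ => 0) (fun _ => 1)

/-- The canonical Poisson bracket on polynomial functions on `T*ℝⁿ`. -/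
noncomputable def poissonBr {n : ℕ} (F G : MvPolynomial (Fin n ⊕ Fin n) ℝ) :
    MvPolynomial (Fin n ⊕ Fin n) ℝ :=
  ∑ i : Fin n,
    (pderiv (Sum.inr i) F * pderiv (Sum.inl i) G
      - pderiv (Sum.inl i) F * pderiv (Sum.inr i) G)

/-- `Sgr n j` is the homogeneous component `S_j` of fiber degree `j` (zero for `j < 0`). -/
noncomputable def Sgr (n : ℕ) (j : ℤ) : Submodule ℝ (MvPolynomial (Fin n ⊕ Fin n) ℝ) :=
  if j < 0 then ⊥ else weightedHomogeneousSubmodule ℝ (xiWeight n) j.toNat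

section Aux

variable {n : ℕ}

lemma coeff_pderiv (j : Fin n ⊕ Fin n) (F : MvPolynomial (Fin n ⊕ Fin n) ℝ)
    (d : (Fin n ⊕ Fin n) →₀ ℕ) :
    coeff d (pderiv j F) = ((d j : ℝ) + 1) * coeff (d + Finsupp.single j 1) F := by
  induction F using MvPolynomial.induction_on' with
  | monomial s a =>
      rw [pderiv_monomial]
      simp only [coeff_monomial]
      by_cases h : s = d + Finsupp.single j 1
      · subst h
        rw [if_pos (add_tsub_cancel_right d (Finsupp.single j 1)), if_pos rfl]
        simp [Finsupp.add_apply, Finsupp.single_eq_same]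
        ring
      · rw [if_neg h, mul_zero]
        by_cases hs : s j = 0
        · split_ifs <;> simp [hs]
        · rw [if_neg]
          intro hd
          apply h
          rw [← hd, tsub_add_cancel_of_le]
          exact Finsupp.single_le_iff.mpr (Nat.one_le_iff_ne_zero.mpr hs)
  | add p q hp hq => simp [hp, hq, mul_add]

lemma weight_add_of_coeff_pderiv {w : Fin n ⊕ Fin n → ℕ} {F : MvPolynomial (Fin n ⊕ Fin n) ℝ}
    {m : ℕ} (hF : F.IsWeightedHomogeneous w m) (j : Fin n ⊕ Fin n)
    {d : (Fin n ⊕ Fin n) →₀ ℕ} (hd : coeff d (pderiv j F) ≠ 0) :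
    Finsupp.weight w d + w j = m := by
  rw [coeff_pderiv] at hd
  have h2 : coeff (d + Finsupp.single j 1) F ≠ 0 := right_ne_zero_of_mul hd
  have h3 := hF h2
  rw [map_add] at h3
  simpa [Finsupp.weight_apply, Finsupp.sum_single_index] using h3

end Aux

section Aux2

variable {n : ℕ}

lemma isWH_pderiv_inl {F : MvPolynomial (Fin n ⊕ Fin n) ℝ} {m : ℕ}
    (hF : F.IsWeightedHomogeneous (xiWeight n) m) (i : Fin n) :
    (pderiv (Sum.inl i) F).IsWeightedHomogeneous (xiWeight n) m := by
  intro d hd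
  have h := weight_add_of_coeff_pderiv hF _ hd
  have hw : xiWeight n (Sum.inl i) = 0 := rfl
  rw [hw, add_zero] at h
  exact h

lemma isWH_pderiv_inr {F : MvPolynomial (Fin n ⊕ Fin n) ℝ} {m m' : ℕ}
    (hF : F.IsWeightedHomogeneous (xiWeight n) m) (i : Fin n) (hm : m' + 1 = m) :
    (pderiv (Sum.inr i) F).IsWeightedHomogeneous (xiWeight n) m' := by
  intro d hd
  have h := weight_add_of_coeff_pderiv hF _ hd
  have hw : xiWeight n (Sum.inr i) = 1 := rfl
  rw [hw] at h
  omega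

lemma pderiv_inr_eq_zero {F : MvPolynomial (Fin n ⊕ Fin n) ℝ}
    (hF : F.IsWeightedHomogeneous (xiWeight n) 0) (i : Fin n) :
    pderiv (Sum.inr i) F = 0 := by
  ext d
  rw [coeff_zero]
  by_contra hd
  have h := weight_add_of_coeff_pderiv hF _ hd
  have hw : xiWeight n (Sum.inr i) = 1 := rfl
  rw [hw] at h
  omega

lemma poissonBr_isWH {F G : MvPolynomial (Fin n ⊕ Fin n) ℝ} {a b s : ℕ}
    (hF : F.IsWeightedHomogeneous (xiWeight n) a) (hG : G.IsWeightedHomogeneous (xiWeight n) b)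
    (hs : a + b = s + 1) :
    (poissonBr F G).IsWeightedHomogeneous (xiWeight n) s := by
  rw [← mem_weightedHomogeneousSubmodule ℝ]
  apply Submodule.sum_mem
  intro i _
  apply Submodule.sub_mem
  · rcases Nat.eq_zero_or_pos a with ha | ha
    · subst ha
      rw [pderiv_inr_eq_zero hF, zero_mul]
      exact Submodule.zero_mem _
    · rw [mem_weightedHomogeneousSubmodule]
      have h1 := isWH_pderiv_inr hF i (m' := a - 1) (by omega)
      have := h1.mul (isWH_pderiv_inl hG i)
      have hab : a - 1 + b = s := by omega
      rwa [hab] at this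
  · rcases Nat.eq_zero_or_pos b with hb | hb
    · subst hb
      rw [pderiv_inr_eq_zero hG, mul_zero]
      exact Submodule.zero_mem _
    · rw [mem_weightedHomogeneousSubmodule]
      have h1 := isWH_pderiv_inr hG i (m' := b - 1) (by omega)
      have := (isWH_pderiv_inl hF i).mul h1
      have hab : a + (b - 1) = s := by omega
      rwa [hab] at this

end Aux2

section Aux3

variable {n : ℕ}

/-- The Poisson bracket with fixed right argument, as a linear map. -/
noncomputable def brL (P : MvPolynomial (Fin n ⊕ Fin n) ℝ) :
    MvPolynomial (Fin n ⊕ Fin n) ℝ →ₗ[ℝ] MvPolynomial (Fin n ⊕ Fin n) ℝ :=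
  ∑ i : Fin n,
    ((LinearMap.mulRight ℝ (pderiv (Sum.inl i) P)).comp
        (pderiv (Sum.inr i) : Derivation ℝ _ _).toLinearMap
      - (LinearMap.mulRight ℝ (pderiv (Sum.inr i) P)).comp
        (pderiv (Sum.inl i) : Derivation ℝ _ _).toLinearMap)

lemma brL_apply (P F : MvPolynomial (Fin n ⊕ Fin n) ℝ) : brL P F = poissonBr F P := by
  simp [brL, poissonBr, LinearMap.sum_apply]

lemma poissonBr_C (c : ℝ) (P : MvPolynomial (Fin n ⊕ Fin n) ℝ) :
    poissonBr (C c) P = 0 := by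
  simp [poissonBr]

lemma poissonBr_zero_left (P : MvPolynomial (Fin n ⊕ Fin n) ℝ) :
    poissonBr 0 P = 0 := by
  simp [poissonBr]

lemma eq_C_of_pderiv_eq_zero {F : MvPolynomial (Fin n ⊕ Fin n) ℝ}
    (h : ∀ j, pderiv j F = 0) : F = C (constantCoeff F) := by
  ext d
  rw [coeff_C]
  by_cases hd : d = 0
  · subst hd; simp [constantCoeff_eq]
  · rw [if_neg (by simpa using fun h' => hd h'.symm)]
    obtain ⟨j, hj⟩ : ∃ j, d j ≠ 0 := by
      by_contra hc
      push_neg at hc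
      exact hd (Finsupp.ext fun j => hc j)
    have hc := coeff_pderiv j F (d - Finsupp.single j 1)
    rw [h j, coeff_zero] at hc
    have hle : Finsupp.single j 1 ≤ d := Finsupp.single_le_iff.mpr (by omega)
    rw [tsub_add_cancel_of_le hle] at hc
    have hne : (((d - Finsupp.single j 1 : (Fin n ⊕ Fin n) →₀ ℕ) j : ℕ) : ℝ) + 1 ≠ 0 := by
      positivity
    exact (mul_eq_zero.mp hc.symm).resolve_left hne

end Aux3

section Aux4

variable {n : ℕ}

lemma X_inr_pow_isWH (m : Fin n) (k : ℕ) :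
    ((X (Sum.inr m) : MvPolynomial (Fin n ⊕ Fin n) ℝ) ^ k).IsWeightedHomogeneous
      (xiWeight n) k := by
  rw [X_pow_eq_monomial]
  apply isWeightedHomogeneous_monomial
  simp [Finsupp.weight_apply, Finsupp.sum_single_index, xiWeight]

lemma centralizer {k : ℕ} (hk : 1 ≤ k) {F : MvPolynomial (Fin n ⊕ Fin n) ℝ}
    (h : ∀ P : MvPolynomial (Fin n ⊕ Fin n) ℝ,
      P.IsWeightedHomogeneous (xiWeight n) k → poissonBr F P = 0) :
    F = C (constantCoeff F) := by
  have hX : (X : (Fin n ⊕ Fin n) → MvPolynomial (Fin n ⊕ Fin n) ℝ) = X := rfl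
  have hx : ∀ m : Fin n, pderiv (Sum.inl m) F = 0 := by
    intro m
    have key : poissonBr F (X (Sum.inr m) ^ k)
        = -(pderiv (Sum.inl m) F * ((k : MvPolynomial (Fin n ⊕ Fin n) ℝ)
            * X (Sum.inr m) ^ (k - 1))) := by
      show (∑ i : Fin n, _) = _
      rw [Finset.sum_eq_single m]
      · rw [pderiv_pow, pderiv_pow, pderiv_X_of_ne (by simp : (Sum.inr m : Fin n ⊕ Fin n) ≠ Sum.inl m),
          pderiv_X_self]
        ring
      · intro i _ hi
        rw [pderiv_pow, pderiv_pow,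
          pderiv_X_of_ne (by simp : (Sum.inr m : Fin n ⊕ Fin n) ≠ Sum.inl i),
          pderiv_X_of_ne (by simpa using (Ne.symm hi))]
        ring
      · intro hm; exact absurd (Finset.mem_univ m) hm
    have h0 := h _ (X_inr_pow_isWH m k)
    rw [key, neg_eq_zero] at h0
    rcases mul_eq_zero.mp h0 with h1 | h1
    · exact h1
    · exfalso
      have hk0 : ((k : MvPolynomial (Fin n ⊕ Fin n) ℝ)) ≠ 0 := by
        exact_mod_cast Nat.cast_ne_zero.mpr (by omega)
      exact mul_ne_zero hk0 (pow_ne_zero _ (X_ne_zero _)) h1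
  have hxi : ∀ l : Fin n, pderiv (Sum.inr l) F = 0 := by
    intro l
    have hP : ((X (Sum.inl l) : MvPolynomial (Fin n ⊕ Fin n) ℝ)
        * X (Sum.inr l) ^ k).IsWeightedHomogeneous (xiWeight n) k := by
      have h1 := isWeightedHomogeneous_X ℝ (xiWeight n) (Sum.inl l)
      have h3 := h1.mul (X_inr_pow_isWH l k)
      rwa [show xiWeight n (Sum.inl l) + k = k from by simp [xiWeight]] at h3
    have key : poissonBr F (X (Sum.inl l) * X (Sum.inr l) ^ k)
        = pderiv (Sum.inr l) F * X (Sum.inr l) ^ k := by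
      show (∑ i : Fin n, _) = _
      rw [Finset.sum_eq_single l]
      · rw [pderiv_mul, pderiv_mul, pderiv_pow, pderiv_pow,
          pderiv_X_self,
          pderiv_X_of_ne (by simp : (Sum.inr l : Fin n ⊕ Fin n) ≠ Sum.inl l),
          pderiv_X_of_ne (by simp : (Sum.inl l : Fin n ⊕ Fin n) ≠ Sum.inr l),
          pderiv_X_self, hx l]
        ring
      · intro i _ hi
        rw [pderiv_mul, pderiv_mul, pderiv_pow, pderiv_pow,
          pderiv_X_of_ne (by simpa using fun h' => hi h'.symm : (Sum.inl l : Fin n ⊕ Fin n) ≠ Sum.inl i),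
          pderiv_X_of_ne (by simp : (Sum.inr l : Fin n ⊕ Fin n) ≠ Sum.inl i),
          pderiv_X_of_ne (by simp : (Sum.inl l : Fin n ⊕ Fin n) ≠ Sum.inr i),
          pderiv_X_of_ne (by simpa using fun h' => hi h'.symm : (Sum.inr l : Fin n ⊕ Fin n) ≠ Sum.inr i)]
        ring
      · intro hm; exact absurd (Finset.mem_univ l) hm
    have h0 := h _ hP
    rw [key] at h0
    rcases mul_eq_zero.mp h0 with h1 | h1
    · exact h1
    · exact absurd h1 (pow_ne_zero _ (X_ne_zero _))
  apply eq_C_of_pderiv_eq_zero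
  intro j
  cases j with
  | inl m => exact hx m
  | inr l => exact hxi l

end Aux4

section Aux5

variable {n : ℕ}

lemma lmap_finsum {M N : Type*} [AddCommMonoid M] [AddCommMonoid N] [Module ℝ M]
    [Module ℝ N] (g : M →ₗ[ℝ] N) {ι : Type*} {f : ι → M}
    (hf : (Function.support f).Finite) : g (∑ᶠ i, f i) = ∑ᶠ i, g (f i) :=
  g.toAddMonoidHom.map_finsum hf

lemma support_br_finite (S P : MvPolynomial (Fin n ⊕ Fin n) ℝ) :
    (Function.support fun m : ℕ =>
      poissonBr (weightedHomogeneousComponent (xiWeight n) m S) P).Finite := by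
  apply (weightedHomogeneousComponent_finsupp (w := xiWeight n) (φ := S)).subset
  intro m hm
  simp only [Function.mem_support] at hm ⊢
  intro hc
  exact hm (by rw [hc, poissonBr_zero_left])

lemma poissonBr_finsum (S P : MvPolynomial (Fin n ⊕ Fin n) ℝ) :
    poissonBr S P
      = ∑ᶠ m : ℕ, poissonBr (weightedHomogeneousComponent (xiWeight n) m S) P := by
  conv_lhs => rw [← finsum_weightedHomogeneousComponent (w := xiWeight n) (φ := S)]
  rw [← brL_apply, lmap_finsum (brL P)
    (weightedHomogeneousComponent_finsupp (w := xiWeight n) (φ := S))]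
  simp only [brL_apply]

lemma comp_bracket_eq_zero {i : ℤ} {k : ℕ} (hk : 1 ≤ k)
    {S P : MvPolynomial (Fin n ⊕ Fin n) ℝ}
    (hP : P.IsWeightedHomogeneous (xiWeight n) k)
    (hSP : poissonBr S P ∈ Sgr n i) {j : ℕ} (hj : (j : ℤ) ≠ i - k + 1) :
    poissonBr (weightedHomogeneousComponent (xiWeight n) j S) P = 0 := by
  have hB : (poissonBr (weightedHomogeneousComponent (xiWeight n) j S) P).IsWeightedHomogeneous
      (xiWeight n) (j + k - 1) :=
    poissonBr_isWH (weightedHomogeneousComponent_isWeightedHomogeneous j S) hP (by omega)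
  have h1 : weightedHomogeneousComponent (xiWeight n) (j + k - 1) (poissonBr S P) = 0 := by
    by_cases hi : i < 0
    · rw [Sgr, if_pos hi, Submodule.mem_bot] at hSP
      rw [hSP, map_zero]
    · rw [Sgr, if_neg hi, mem_weightedHomogeneousSubmodule] at hSP
      exact hSP.weightedHomogeneousComponent_ne _ (by omega)
  have h2 : weightedHomogeneousComponent (xiWeight n) (j + k - 1) (poissonBr S P)
      = poissonBr (weightedHomogeneousComponent (xiWeight n) j S) P := by
    rw [poissonBr_finsum S P,
      lmap_finsum (weightedHomogeneousComponent (xiWeight n) (j + k - 1))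
        (support_br_finite S P)]
    rw [finsum_eq_single _ j]
    · exact (poissonBr_isWH (weightedHomogeneousComponent_isWeightedHomogeneous j S) hP
        (by omega)).weightedHomogeneousComponent_same
    · intro m hm
      exact (poissonBr_isWH (s := m + k - 1)
        (weightedHomogeneousComponent_isWeightedHomogeneous m S) hP
        (by omega)).weightedHomogeneousComponent_ne _ (by omega)
  rw [← h2, h1]

end Aux5

/-- For `i ≥ -1` and `k ≥ 1`, `{S : {S, S_k} ⊆ S_i} = ℝ·1 + S_{i-k+1}`. -/
theorem bracket_with_Sk_in_Si_iff {n : ℕ} (i : ℤ) (hi : -1 ≤ i) (k : ℕ) (hk : 1 ≤ k) :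
    {S : MvPolynomial (Fin n ⊕ Fin n) ℝ | ∀ P ∈ Sgr n k, poissonBr S P ∈ Sgr n i} =
      {S : MvPolynomial (Fin n ⊕ Fin n) ℝ |
        ∃ c : ℝ, ∃ T ∈ Sgr n (i - k + 1), S = C c + T} := by
  have hkk : ¬ ((k : ℤ) < 0) := by omega
  have hmemk : ∀ P : MvPolynomial (Fin n ⊕ Fin n) ℝ,
      P ∈ Sgr n (k : ℤ) ↔ P.IsWeightedHomogeneous (xiWeight n) k := by
    intro P
    rw [Sgr, if_neg hkk, mem_weightedHomogeneousSubmodule, Int.toNat_natCast]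
  ext S
  simp only [Set.mem_setOf_eq]
  constructor
  · intro hS
    by_cases hd : i - k + 1 < 0
    · refine ⟨constantCoeff S, 0, ?_, ?_⟩
      · rw [Sgr, if_pos hd]
        exact Submodule.zero_mem _
      · rw [add_zero]
        apply centralizer hk
        intro P hPk
        have hSP := hS P ((hmemk P).mpr hPk)
        rw [poissonBr_finsum S P]
        apply finsum_eq_zero_of_forall_eq_zero
        intro m
        exact comp_bracket_eq_zero hk hPk hSP (by omega)
    · push_neg at hd
      set d : ℕ := (i - k + 1).toNat with hdd
      set T := weightedHomogeneousComponent (xiWeight n) d S with hT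
      have hThom : T.IsWeightedHomogeneous (xiWeight n) d :=
        weightedHomogeneousComponent_isWeightedHomogeneous d S
      have hR : ∀ P : MvPolynomial (Fin n ⊕ Fin n) ℝ,
          P.IsWeightedHomogeneous (xiWeight n) k → poissonBr (S - T) P = 0 := by
        intro P hPk
        have hSP := hS P ((hmemk P).mpr hPk)
        rw [poissonBr_finsum (S - T) P]
        apply finsum_eq_zero_of_forall_eq_zero
        intro m
        rw [map_sub]
        by_cases hm : m = d
        · subst hm
          rw [hThom.weightedHomogeneousComponent_same, hT, sub_self, poissonBr_zero_left]
        · rw [hThom.weightedHomogeneousComponent_ne m hm, sub_zero]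
          exact comp_bracket_eq_zero hk hPk hSP (by omega)
      have hRC := centralizer hk hR
      refine ⟨constantCoeff (S - T), T, ?_, ?_⟩
      · rw [Sgr, if_neg (by omega)]
        exact weightedHomogeneousComponent_mem _ S d
      · exact sub_eq_iff_eq_add.mp hRC
  · rintro ⟨c, T, hT, rfl⟩
    intro P hP
    have hPk := (hmemk P).mp hP
    have hbr : poissonBr (C c + T) P = poissonBr T P := by
      rw [← brL_apply, map_add, brL_apply, brL_apply, poissonBr_C, zero_add]
    rw [hbr]
    by_cases hd : i - k + 1 < 0
    · rw [Sgr, if_pos hd, Submodule.mem_bot] at hT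
      rw [hT, poissonBr_zero_left]
      exact Submodule.zero_mem _
    · rw [Sgr, if_neg hd, mem_weightedHomogeneousSubmodule] at hT
      rw [Sgr, if_neg (by omega), mem_weightedHomogeneousSubmodule]
      exact poissonBr_isWH hT hPk (by omega)
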